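/- arXiv:1809.00271 — 4 statements merged into one kernel-verified Lean document; each statement's English description precedes it below -/
import Mathlib

section
/- For any f, g ∈ 𝒜 and m, n ∈ ℤ, the local functional of the residue of the commutator vanishes: res[fΛᵐ, gΛⁿ] = δ_{m+n,0}·(f·Λᵐg − g·Λⁿf), and when n = −m the element f·Λᵐg − g·Λ⁻ᵐf lies in the image of ∂ₓ on 𝒜 (so ∫ res[fΛᵐ, gΛⁿ] dx = 0). -/
open scoped BigOperators

noncomputable section

/-- `DPoly = ℂ[τ][u₀,u₁,…]`: differential polynomials in `u` with an extra parameter `τ`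
(the variable of the base ring `Polynomial ℂ`). -/
abbrev DPoly : Type := MvPolynomial ℕ (Polynomial ℂ)

/-- `R = ℂ[τ][u₀,u₁,…][[ε]]`, a ring containing `𝒜[τ]` where `𝒜 = ℂ[u₀,u₁,…][[ε]]`. -/
abbrev R : Type := PowerSeries DPoly

/-- the variable `uₖ`, the `k`-th spatial derivative of `u = u₀`. -/
def uVar (k : ℕ) : DPoly := MvPolynomial.X k

/-- the formal variable `τ` in `DPoly`. -/
def tauP : DPoly := MvPolynomial.C Polynomial.X

/-- the formal variable `τ` in `R`. -/
def tauR : R := PowerSeries.C tauP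

/-- `u = u₀` as an element of `R`. -/
def uR : R := PowerSeries.C (uVar 0)

/-- the imaginary unit as a constant of `DPoly`. -/
def iC : DPoly := MvPolynomial.C (Polynomial.C Complex.I)

/-- `iε` as an element of `R` (`ε` is the power series variable). -/
def ieps : R := PowerSeries.C iC * PowerSeries.X

/-- The spatial derivative `∂ₓ` on differential polynomials:
`∂ₓ a = Σ_k u_{k+1} ∂a/∂u_k`. -/
def dxP (a : DPoly) : DPoly := a.vars.sum fun k => uVar (k + 1) * MvPolynomial.pderiv k a

/-- The spatial derivative `∂ₓ` on `R`, acting coefficientwise in `ε`. -/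
def dx (a : R) : R := PowerSeries.mk fun N => dxP (PowerSeries.coeff N a)

/-- The operator `iε∂ₓ` on `R`. -/
def iepsdx (a : R) : R := ieps * dx a

/-- The action of the shift `Λ^m = e^{imε∂ₓ}` on `R`:
`Λ^m a = Σ_{k≥0} ((imε)^k/k!) ∂ₓ^k a`. -/
def shift (m : ℤ) (a : R) : R :=
  PowerSeries.mk fun N => ∑ k ∈ Finset.range (N + 1),
    ((Complex.I * (m : ℂ)) ^ k / (Nat.factorial k : ℂ)) • dxP^[k] (PowerSeries.coeff (N - k) a)

/-- Shift(-difference)-differential operators: `A n j` is the coefficient of `Λ^n (iε∂ₓ)^j`.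
Operators appearing in the ILW Lax formalism have support bounded above in `n`
and concentrated in `j ∈ {0, 1}`. -/
abbrev ShiftOp : Type := ℤ → ℕ → R

namespace ShiftOp

/-- the identity operator -/
def one : ShiftOp := fun n j => if n = 0 ∧ j = 0 then 1 else 0

/-- multiplication of an operator by an element of `R` -/
def smulR (r : R) (A : ShiftOp) : ShiftOp := fun n j => r * A n j

/-- difference of operators -/
def sub (A B : ShiftOp) : ShiftOp := fun n j => A n j - B n j

/-- Composition of shift operators, determined by the rules
`(aΛ^p)∘(bΛ^q) = a (Λ^p b) Λ^{p+q}`, `(iε∂ₓ)∘a = a·iε∂ₓ + iε∂ₓ(a)`,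
`(iε∂ₓ)∘Λ^n = Λ^n∘(iε∂ₓ)`.  (The finite sum `∑ᶠ` takes the junk value `0`
if the relevant support is infinite, which does not happen for operators
with `n`-support bounded above and bounded `j`-support.) -/
def mul (A B : ShiftOp) : ShiftOp := fun n j =>
  ∑ᶠ (p : ℤ) (s : ℕ) (t : ℕ) (l : ℕ),
    if l ≤ s ∧ s - l + t = j then
      (Nat.choose s l : R) * A p s * shift p (iepsdx^[l] (B (n - p) t))
    else 0

/-- commutator of operators -/
def comm (A B : ShiftOp) : ShiftOp := sub (mul A B) (mul B A)

/-- the positive part `A₊` of an operator: keep only `Λ^n` with `n ≥ 0` -/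
def pos (A : ShiftOp) : ShiftOp := fun n j => if 0 ≤ n then A n j else 0

/-- the residue of an operator: the coefficient of `Λ^0 (iε∂ₓ)^0` -/
def res (A : ShiftOp) : R := A 0 0

/-- the operator of multiplication by `r ∈ R` -/
def scalar (r : R) : ShiftOp := fun n j => if n = 0 ∧ j = 0 then r else 0

/-- powers of an operator -/
def pow (A : ShiftOp) : ℕ → ShiftOp
  | 0 => one
  | k + 1 => mul A (pow A k)

end ShiftOp

/-- The operator `ℒ = Λ + u − τ·iε∂ₓ`. -/
def LaxCalL : ShiftOp := fun n j =>
  if n = 1 ∧ j = 0 then 1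
  else if n = 0 ∧ j = 0 then uR
  else if n = 0 ∧ j = 1 then -tauR
  else 0

/-- `L` is of the form `Λ + Σ_{n≥0} aₙ Λ^{-n}`. -/
def IsLaxForm (L : ShiftOp) : Prop :=
  L 1 0 = 1 ∧ (∀ n : ℤ, 1 < n → L n 0 = 0) ∧ ∀ (n : ℤ) (j : ℕ), 1 ≤ j → L n j = 0

/-- an element of `R` vanishes after the evaluation `uₖ ↦ 0`. -/
def VanishesAtU0 (a : R) : Prop :=
  ∀ N : ℕ, MvPolynomial.coeff (0 : ℕ →₀ ℕ) (PowerSeries.coeff N a) = 0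

/-- `M = log L`: it has the form `iε∂ₓ + Σ_{n≥1} fₙΛ^{-n}` with each `fₙ` vanishing at
`u = 0`, and commutes with `L` (this characterizes the logarithm
`log L = P∘(iε∂ₓ)∘P⁻¹` defined via a dressing operator `P` with `L = P∘Λ∘P⁻¹`). -/
def IsLogOf (M L : ShiftOp) : Prop :=
  M 0 1 = 1 ∧ (∀ n : ℤ, n ≠ 0 → M n 1 = 0) ∧ (∀ (n : ℤ) (j : ℕ), 2 ≤ j → M n j = 0) ∧
  (∀ n : ℤ, 0 ≤ n → M n 0 = 0) ∧ (∀ n : ℤ, VanishesAtU0 (M n 0)) ∧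
  ShiftOp.mul M L = ShiftOp.mul L M

/-- an element of `R = ℂ[τ][u₀,u₁,…][[ε]]` lies in `𝒜[τ]`, `𝒜 = ℂ[u₀,u₁,…][[ε]]`:
its `τ`-degrees are uniformly bounded. -/
def inATau (a : R) : Prop :=
  ∃ D : ℕ, ∀ (N : ℕ) (m : ℕ →₀ ℕ), ((PowerSeries.coeff N a).coeff m).natDegree ≤ D

/-- `v = ∂u/∂T_d := (1/(τiε(d+1)!))·[(L^{d+1})₊, ℒ]`, i.e. the commutator
`[(L^{d+1})₊, ℒ]` is the operator of multiplication by `τ·iε·(d+1)!·v`. -/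
def IsFlow (L : ShiftOp) (d : ℕ) (v : R) : Prop :=
  ShiftOp.comm (ShiftOp.pos (ShiftOp.pow L (d + 1))) LaxCalL
    = ShiftOp.scalar (tauR * ieps * ((Nat.factorial (d + 1) : ℕ) : R) * v)
/-- an element of `R = ℂ[τ][u₀,…][[ε]]` lies in `𝒜 = ℂ[u₀,…][[ε]]` (no `τ`-dependence) -/
def noTau (a : R) : Prop :=
  ∀ (N : ℕ) (m : ℕ →₀ ℕ), ((PowerSeries.coeff N a).coeff m).natDegree = 0

/-- the one-term operator `f·Λ^m` -/
def single (f : R) (m : ℤ) : ShiftOp := fun n j => if n = m ∧ j = 0 then f else 0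

section Aux

open MvPolynomial in
lemma dxP_eq_sum_subset {a : DPoly} {S : Finset ℕ} (h : a.vars ⊆ S) :
    dxP a = ∑ k ∈ S, uVar (k + 1) * MvPolynomial.pderiv k a := by
  rw [dxP]
  exact Finset.sum_subset h fun x _ hx => by
    rw [MvPolynomial.pderiv_eq_zero_of_notMem_vars hx, mul_zero]

lemma dxP_zero : dxP (0 : DPoly) = 0 := by
  simp [dxP, MvPolynomial.vars_0]

lemma dxP_add (a b : DPoly) : dxP (a + b) = dxP a + dxP b := by
  rw [dxP_eq_sum_subset (MvPolynomial.vars_add_subset a b),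
    dxP_eq_sum_subset (Finset.subset_union_left (s₁ := a.vars) (s₂ := b.vars)),
    dxP_eq_sum_subset (Finset.subset_union_right (s₁ := a.vars) (s₂ := b.vars)),
    ← Finset.sum_add_distrib]
  refine Finset.sum_congr rfl fun k _ => ?_
  rw [map_add, mul_add]

lemma dxP_mul (a b : DPoly) : dxP (a * b) = dxP a * b + a * dxP b := by
  rw [dxP_eq_sum_subset (MvPolynomial.vars_mul a b),
    dxP_eq_sum_subset (Finset.subset_union_left (s₁ := a.vars) (s₂ := b.vars)),
    dxP_eq_sum_subset (Finset.subset_union_right (s₁ := a.vars) (s₂ := b.vars)),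
    Finset.sum_mul, Finset.mul_sum, ← Finset.sum_add_distrib]
  refine Finset.sum_congr rfl fun k _ => ?_
  rw [MvPolynomial.pderiv_mul]
  ring

lemma dxP_smul (c : ℂ) (a : DPoly) : dxP (c • a) = c • dxP a := by
  have h1 : c • a = MvPolynomial.C (Polynomial.C c) * a := by
    rw [← MvPolynomial.smul_eq_C_mul, ← algebraMap_smul (Polynomial ℂ) c a,
      Polynomial.algebraMap_eq]
  have h2 : c • dxP a = MvPolynomial.C (Polynomial.C c) * dxP a := by
    rw [← MvPolynomial.smul_eq_C_mul, ← algebraMap_smul (Polynomial ℂ) c (dxP a),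
      Polynomial.algebraMap_eq]
  rw [h1, h2, dxP_mul]
  have : dxP (MvPolynomial.C (Polynomial.C c) : DPoly) = 0 := by
    simp [dxP, MvPolynomial.vars_C]
  rw [this, zero_mul, zero_add]

lemma dxP_sum {ι : Type*} (s : Finset ι) (F : ι → DPoly) :
    dxP (∑ i ∈ s, F i) = ∑ i ∈ s, dxP (F i) :=
  map_sum (AddMonoidHom.mk' dxP dxP_add) F s

end Aux
section Aux2

lemma dxP_tele (k : ℕ) (F G : DPoly) :
    dxP (∑ j ∈ Finset.range k, ((-1 : ℂ)) ^ j • (dxP^[j] F * dxP^[k - 1 - j] G))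
      = F * dxP^[k] G - ((-1 : ℂ)) ^ k • (dxP^[k] F * G) := by
  rw [dxP_sum]
  have key : ∀ j ∈ Finset.range k,
      dxP (((-1 : ℂ)) ^ j • (dxP^[j] F * dxP^[k - 1 - j] G))
        = (fun i => ((-1 : ℂ)) ^ i • (dxP^[i] F * dxP^[k - i] G)) j
          - (fun i => ((-1 : ℂ)) ^ i • (dxP^[i] F * dxP^[k - i] G)) (j + 1) := by
    intro j hj
    simp only [Finset.mem_range] at hj
    have hkj : k - j = (k - 1 - j) + 1 := by omega
    have hkj' : k - (j + 1) = k - 1 - j := by omega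
    simp only [hkj, hkj']
    rw [dxP_smul, dxP_mul]
    rw [← Function.iterate_succ_apply' dxP j F, ← Function.iterate_succ_apply' dxP (k-1-j) G]
    rw [pow_succ, mul_neg_one, neg_smul, sub_neg_eq_add, smul_add]
    rw [add_comm]
  rw [Finset.sum_congr rfl key, Finset.sum_range_sub']
  simp

end Aux2
section Aux3

lemma coeff_mul_shift (φ ψ : R) (m : ℤ) (N : ℕ) :
    PowerSeries.coeff N (φ * shift m ψ)
      = ∑ k ∈ Finset.range (N + 1), ∑ a ∈ Finset.range (N + 1 - k),
          ((Complex.I * (m : ℂ)) ^ k / (Nat.factorial k : ℂ)) •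
            (PowerSeries.coeff a φ * dxP^[k] (PowerSeries.coeff (N - k - a) ψ)) := by
  rw [PowerSeries.coeff_mul, Finset.Nat.sum_antidiagonal_eq_sum_range_succ_mk]
  have step : ∀ a ∈ Finset.range (N + 1),
      PowerSeries.coeff a φ * PowerSeries.coeff (N - a) (shift m ψ)
        = ∑ k ∈ Finset.range (N + 1 - a),
            ((Complex.I * (m : ℂ)) ^ k / (Nat.factorial k : ℂ)) •
              (PowerSeries.coeff a φ * dxP^[k] (PowerSeries.coeff (N - k - a) ψ)) := by
    intro a ha
    simp only [Finset.mem_range] at ha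
    rw [shift, PowerSeries.coeff_mk, Finset.mul_sum]
    have hr : N - a + 1 = N + 1 - a := by omega
    rw [hr]
    refine Finset.sum_congr rfl fun k hk => ?_
    simp only [Finset.mem_range] at hk
    have : N - a - k = N - k - a := by omega
    rw [this, mul_smul_comm]
  rw [Finset.sum_congr rfl step]
  rw [Finset.sum_comm' (t' := Finset.range (N + 1)) (s' := fun k => Finset.range (N + 1 - k))]
  intro x y
  simp only [Finset.mem_range]
  omega

/-- the `h`-coefficients -/
def Hcoef (f g : R) (m : ℤ) (N : ℕ) : DPoly :=
  ∑ k ∈ Finset.range (N + 1), ∑ a ∈ Finset.range (N + 1 - k),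
    ((Complex.I * (m : ℂ)) ^ k / (Nat.factorial k : ℂ)) •
      ∑ j ∈ Finset.range k, ((-1 : ℂ)) ^ j •
        (dxP^[j] (PowerSeries.coeff a f) * dxP^[k - 1 - j] (PowerSeries.coeff (N - k - a) g))

lemma dxP_Hcoef (f g : R) (m : ℤ) (N : ℕ) :
    dxP (Hcoef f g m N)
      = PowerSeries.coeff N (f * shift m g - g * shift (-m) f) := by
  rw [map_sub, coeff_mul_shift, coeff_mul_shift]
  -- rewrite second sum: reflect inner index, and pull out (-1)^k
  have hneg : ∀ k : ℕ, ((Complex.I * ((-m : ℤ) : ℂ)) ^ k / (Nat.factorial k : ℂ))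
      = (-1 : ℂ) ^ k * ((Complex.I * (m : ℂ)) ^ k / (Nat.factorial k : ℂ)) := by
    intro k
    have : Complex.I * ((-m : ℤ) : ℂ) = -(Complex.I * (m : ℂ)) := by push_cast; ring
    rw [this, neg_pow, mul_div_assoc]
  have second : ∀ k ∈ Finset.range (N + 1),
      (∑ a ∈ Finset.range (N + 1 - k),
        ((Complex.I * ((-m : ℤ) : ℂ)) ^ k / (Nat.factorial k : ℂ)) •
          (PowerSeries.coeff a g * dxP^[k] (PowerSeries.coeff (N - k - a) f)))
      = ∑ a ∈ Finset.range (N + 1 - k),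
          ((Complex.I * (m : ℂ)) ^ k / (Nat.factorial k : ℂ)) •
            ((-1 : ℂ) ^ k • (dxP^[k] (PowerSeries.coeff a f)
              * PowerSeries.coeff (N - k - a) g)) := by
    intro k hk
    simp only [Finset.mem_range] at hk
    rw [← Finset.sum_range_reflect]
    refine Finset.sum_congr rfl fun a ha => ?_
    simp only [Finset.mem_range] at ha
    have h1 : N - k - (N + 1 - k - 1 - a) = a := by omega
    have h2 : N + 1 - k - 1 - a = N - k - a := by omega
    rw [h1, h2, hneg, mul_smul, smul_comm ((-1:ℂ)^k),
      mul_comm (PowerSeries.coeff (N - k - a) g)]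
  rw [Finset.sum_congr rfl second, ← Finset.sum_sub_distrib]
  rw [Hcoef, dxP_sum]
  refine Finset.sum_congr rfl fun k hk => ?_
  rw [dxP_sum, ← Finset.sum_sub_distrib]
  refine Finset.sum_congr rfl fun a ha => ?_
  rw [dxP_smul, dxP_tele, smul_sub]

end Aux3
section Aux4

/-- "constant in τ" differential polynomials -/
def isConst (a : DPoly) : Prop :=
  ∃ a₀ : MvPolynomial ℕ ℂ, MvPolynomial.map (Polynomial.C : ℂ →+* Polynomial ℂ) a₀ = a

lemma isConst_zero : isConst 0 := ⟨0, map_zero _⟩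

lemma isConst_add {a b : DPoly} (ha : isConst a) (hb : isConst b) : isConst (a + b) := by
  obtain ⟨a₀, rfl⟩ := ha; obtain ⟨b₀, rfl⟩ := hb
  exact ⟨a₀ + b₀, map_add _ _ _⟩

lemma isConst_mul {a b : DPoly} (ha : isConst a) (hb : isConst b) : isConst (a * b) := by
  obtain ⟨a₀, rfl⟩ := ha; obtain ⟨b₀, rfl⟩ := hb
  exact ⟨a₀ * b₀, map_mul _ _ _⟩

lemma isConst_smul (c : ℂ) {a : DPoly} (ha : isConst a) : isConst (c • a) := by
  obtain ⟨a₀, rfl⟩ := ha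
  refine ⟨c • a₀, ?_⟩
  ext mo
  simp [MvPolynomial.coeff_map, MvPolynomial.coeff_smul, Polynomial.smul_C, smul_eq_mul]

lemma isConst_pderiv (k : ℕ) {a : DPoly} (ha : isConst a) :
    isConst (MvPolynomial.pderiv k a) := by
  obtain ⟨a₀, rfl⟩ := ha
  exact ⟨MvPolynomial.pderiv k a₀, (MvPolynomial.pderiv_map).symm⟩

lemma isConst_uVar (k : ℕ) : isConst (uVar k) := ⟨MvPolynomial.X k, by rw [MvPolynomial.map_X, uVar]⟩

lemma isConst_sum {ι : Type*} (s : Finset ι) (F : ι → DPoly)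
    (h : ∀ i ∈ s, isConst (F i)) : isConst (∑ i ∈ s, F i) := by
  classical
  induction s using Finset.induction_on with
  | empty => simpa using isConst_zero
  | insert x s hx ih =>
    rw [Finset.sum_insert hx]
    exact isConst_add (h _ (Finset.mem_insert_self _ _))
      (ih fun i hi => h i (Finset.mem_insert_of_mem hi))

lemma isConst_dxP {a : DPoly} (ha : isConst a) : isConst (dxP a) := by
  rw [dxP]
  exact isConst_sum _ _ fun k _ => isConst_mul (isConst_uVar _) (isConst_pderiv _ ha)

lemma isConst_dxP_iter (k : ℕ) {a : DPoly} (ha : isConst a) : isConst (dxP^[k] a) := by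
  induction k with
  | zero => simpa using ha
  | succ k ih => rw [Function.iterate_succ_apply']; exact isConst_dxP ih

lemma isConst_of_noTau {a : R} (ha : noTau a) (N : ℕ) :
    isConst (PowerSeries.coeff N a) := by
  refine ⟨MvPolynomial.map (Polynomial.evalRingHom (0 : ℂ)) (PowerSeries.coeff N a), ?_⟩
  rw [MvPolynomial.map_map]
  ext mo
  rw [MvPolynomial.coeff_map]
  obtain ⟨c, hc⟩ := Polynomial.natDegree_eq_zero.mp (ha N mo)
  rw [← hc]
  simp

lemma noTau_of_isConst {a : R} (ha : ∀ N, isConst (PowerSeries.coeff N a)) :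
    noTau a := by
  intro N mo
  obtain ⟨a₀, h⟩ := ha N
  rw [← h, MvPolynomial.coeff_map, Polynomial.natDegree_C]

end Aux4
section Aux5

lemma shift_zero' (m : ℤ) : shift m (0 : R) = 0 := by
  ext N
  rw [shift, PowerSeries.coeff_mk]
  simp [Function.iterate_fixed dxP_zero]

lemma mul_single_single (f g : R) (m n : ℤ) :
    ShiftOp.mul (single f m) (single g n) 0 0
      = if m + n = 0 then f * shift m g else 0 := by
  rw [ShiftOp.mul]
  rw [finsum_eq_single _ m (by
    intro p hp
    have h0 : ∀ s : ℕ, single f m p s = 0 := by intro s; simp [single, hp]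
    simp [h0])]
  rw [finsum_eq_single _ 0 (by
    intro s hs
    have h0 : single f m m s = 0 := by simp [single, hs]
    simp [h0])]
  rw [finsum_eq_single _ 0 (by
    intro t ht
    refine finsum_eq_zero_of_forall_eq_zero fun l => ?_
    refine if_neg ?_
    rintro ⟨hl, hc⟩
    omega)]
  rw [finsum_eq_single _ 0 (by
    intro l hl
    exact if_neg (by omega))]
  have hs : single f m m 0 = f := by simp [single]
  rw [if_pos (⟨le_rfl, rfl⟩ : (0 : ℕ) ≤ 0 ∧ 0 - 0 + 0 = 0), Nat.choose_self, Nat.cast_one,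
    one_mul, hs, Function.iterate_zero_apply]
  rcases eq_or_ne (m + n) 0 with hmn | hmn
  · have h1 : single g n (0 - m) 0 = g := by
      rw [single]
      exact if_pos ⟨by omega, rfl⟩
    rw [h1, if_pos hmn]
  · have h1 : single g n (0 - m) 0 = 0 := by
      rw [single]
      exact if_neg (by rintro ⟨h, -⟩; omega)
    rw [h1, shift_zero', mul_zero, if_neg hmn]

end Aux5


/-- For any `f, g ∈ 𝒜` and `m, n ∈ ℤ`:
`res[fΛᵐ, gΛⁿ] = δ_{m+n,0}·(f·Λᵐg − g·Λⁿf)`, and when `n = −m` the element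
`f·Λᵐg − g·Λ⁻ᵐf` lies in the image of `∂ₓ` on `𝒜` (so `∫ res[fΛᵐ, gΛⁿ] dx = 0`). -/
theorem ilw_stmt5 (f g : R) (hf : noTau f) (hg : noTau g) (m n : ℤ) :
    ShiftOp.res (ShiftOp.comm (single f m) (single g n))
      = (if m + n = 0 then f * shift m g - g * shift n f else 0) ∧
    (m + n = 0 → ∃ h : R, noTau h ∧ f * shift m g - g * shift n f = dx h) := by
  constructor
  · have hres : ShiftOp.res (ShiftOp.comm (single f m) (single g n))
        = ShiftOp.mul (single f m) (single g n) 0 0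
          - ShiftOp.mul (single g n) (single f m) 0 0 := rfl
    rw [hres, mul_single_single, mul_single_single, add_comm n m]
    split_ifs with h
    · rfl
    · simp
  · intro hmn
    have hn : n = -m := by omega
    subst hn
    refine ⟨PowerSeries.mk (Hcoef f g m), ?_, ?_⟩
    · refine noTau_of_isConst fun N => ?_
      rw [PowerSeries.coeff_mk, Hcoef]
      refine isConst_sum _ _ fun k _ => isConst_sum _ _ fun a _ => isConst_smul _
        (isConst_sum _ _ fun j _ => isConst_smul _ ?_)
      exact isConst_mul (isConst_dxP_iter _ (isConst_of_noTau hf _))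
        (isConst_dxP_iter _ (isConst_of_noTau hg _))
    · ext N
      rw [dx, PowerSeries.coeff_mk, PowerSeries.coeff_mk, dxP_Hcoef]
end
end

section
/- For every d ≥ 0, ∂ᵤ([t^{d+1}]S^{d+1}/(d+1)!) = (1/d!)·Σ_{j=0}^{d} τʲ·[t^{d−j}]S^{d−j} in ℚ[u,τ]. (In the dispersionless Lax formalism: ∂/∂u (res L̂₀^{d+1}/(d+1)!) = (1/d!)Σ_{j=0}^{d} τʲ res L̂₀^{d−j}.) -/
open scoped BigOperators

noncomputable section

/-- `Q2 = ℚ[u, τ]`, realized with outer variable `u` and inner variable `τ`. -/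
abbrev Q2 : Type := Polynomial (Polynomial ℚ)

/-- the variable `u` -/
def uQ : Q2 := Polynomial.X

/-- the variable `τ` -/
def tauQ : Q2 := Polynomial.C Polynomial.X

/-- `log F = Σ_{k≥1} (−1)^{k+1}(F−1)ᵏ/k` for a power series `F` with constant term 1
(the coefficient of `tᴺ` only receives contributions from `k ≤ N` since `F − 1` has
positive `t`-order). -/
def logPS (F : PowerSeries Q2) : PowerSeries Q2 :=
  PowerSeries.mk fun N => ∑ k ∈ Finset.Icc 1 N,
    ((-1 : ℚ) ^ (k + 1) / (k : ℚ)) • PowerSeries.coeff N ((F - 1) ^ k)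

/-- `S` is the symbol of the dispersionless ILW Lax operator: the power series in `t`
with constant term 1 satisfying `S = 1 + t·(u + τ·log S)`. -/
def IsILWSymbol (S : PowerSeries Q2) : Prop :=
  PowerSeries.constantCoeff S = 1 ∧
  S = 1 + PowerSeries.X * (PowerSeries.C uQ + PowerSeries.C tauQ * logPS S)
/-- `∂ᵤ` acting coefficientwise on `ℚ[u,τ][[t]]` as `d/du` -/
def dU (F : PowerSeries Q2) : PowerSeries Q2 :=
  PowerSeries.mk fun N => Polynomial.derivative (PowerSeries.coeff N F)
namespace ILWaux
open PowerSeries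

lemma dU_coeff (F : PowerSeries Q2) (n : ℕ) :
    PowerSeries.coeff n (dU F) = Polynomial.derivative (PowerSeries.coeff n F) := by
  simp [dU]

lemma dU_one : dU (1 : PowerSeries Q2) = 0 := by
  ext n
  simp only [dU_coeff, PowerSeries.coeff_one, map_zero]
  split <;> simp

lemma dU_X : dU (PowerSeries.X : PowerSeries Q2) = 0 := by
  ext n
  simp only [dU_coeff, PowerSeries.coeff_X, map_zero]
  split <;> simp

lemma dU_C (p : Q2) : dU (PowerSeries.C p) = PowerSeries.C (Polynomial.derivative p) := by
  ext n
  simp only [dU_coeff, PowerSeries.coeff_C]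
  split <;> simp

lemma dU_add (F G : PowerSeries Q2) : dU (F + G) = dU F + dU G := by
  ext n; simp [dU_coeff]

lemma dU_sub (F G : PowerSeries Q2) : dU (F - G) = dU F - dU G := by
  ext n; simp [dU_coeff]

lemma dU_mul (F G : PowerSeries Q2) : dU (F * G) = dU F * G + F * dU G := by
  ext n
  simp only [dU_coeff, PowerSeries.coeff_mul, map_add, map_sum, Polynomial.derivative_mul]
  rw [Finset.sum_add_distrib]

lemma dU_pow (F : PowerSeries Q2) (n : ℕ) :
    dU (F ^ (n + 1)) = (n + 1) • (F ^ n * dU F) := by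
  induction n with
  | zero => simp [dU]
  | succ k ih =>
    rw [pow_succ, dU_mul, ih]
    simp only [nsmul_eq_mul]
    push_cast
    ring

end ILWaux

namespace ILWaux
open PowerSeries Finset

lemma neg_one_pow_smul (i : ℕ) (z : Q2) : ((-1 : ℚ) ^ i) • z = (-1 : Q2) ^ i * z := by
  rw [Algebra.smul_def, map_pow, map_neg, map_one]

lemma coeff_dU_log (S : PowerSeries Q2) (m : ℕ) :
    PowerSeries.coeff m (dU (logPS S)) =
      PowerSeries.coeff m (dU S * ∑ i ∈ Finset.range m, (1 - S) ^ i) := by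
  rw [dU_coeff, logPS, PowerSeries.coeff_mk, map_sum, ← Finset.Ico_add_one_right_eq_Icc,
    Finset.sum_Ico_eq_sum_range]
  rw [Finset.mul_sum, map_sum]
  apply Finset.sum_congr rfl
  intro i _
  rw [Polynomial.derivative_smul, ← dU_coeff, show (1 + i) = i + 1 from by omega,
    dU_pow (S - 1) i, dU_sub, dU_one, sub_zero, map_nsmul,
    ← Nat.cast_smul_eq_nsmul ℚ, smul_smul]
  have h1 : ((-1:ℚ)^(i+1+1)/((i+1 : ℕ):ℚ)) * ((i+1:ℕ):ℚ) = (-1:ℚ)^i := by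
    have h0 : ((i+1:ℕ):ℚ) ≠ 0 := by positivity
    field_simp
    ring
  rw [h1, neg_one_pow_smul, ← PowerSeries.coeff_C_mul]
  refine congrArg (PowerSeries.coeff m) ?_
  rw [show (1 - S : PowerSeries Q2) = (-1) * (S - 1) from by ring, mul_pow,
    map_pow, map_neg, map_one]
  ring

lemma dvd_aux (S A B : PowerSeries Q2) (hA : S - 1 = PowerSeries.X * A)
    (hB : dU S = PowerSeries.X * B) (i : ℕ) :
    (PowerSeries.X : PowerSeries Q2) ^ (i + 1) ∣ (1 - S) ^ i * dU S := by
  have h1 : (1 - S : PowerSeries Q2) = PowerSeries.X * (-A) := by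
    rw [← neg_sub, hA]; ring
  refine ⟨(-A) ^ i * B, ?_⟩
  rw [h1, hB, mul_pow]; ring

lemma dvd_log (S A B : PowerSeries Q2) (hA : S - 1 = PowerSeries.X * A)
    (hB : dU S = PowerSeries.X * B) (N : ℕ) :
    (PowerSeries.X : PowerSeries Q2) ^ (N + 1) ∣
      (dU (logPS S) - dU S * ∑ i ∈ Finset.range N, (1 - S) ^ i) := by
  rw [PowerSeries.X_pow_dvd_iff]
  intro m hm
  rw [map_sub, sub_eq_zero, coeff_dU_log S m]
  have hmn : m ≤ N := Nat.lt_succ_iff.mp hm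
  have hdecomp : (∑ i ∈ Finset.range N, (1 - S) ^ i)
      = (∑ i ∈ Finset.range m, (1 - S) ^ i) + ∑ i ∈ Finset.Ico m N, (1 - S) ^ i :=
    (Finset.sum_range_add_sum_Ico _ hmn).symm
  rw [hdecomp, mul_add, map_add]
  have hz : PowerSeries.coeff m (dU S * ∑ i ∈ Finset.Ico m N, (1 - S) ^ i) = 0 := by
    rw [Finset.mul_sum, map_sum]
    apply Finset.sum_eq_zero
    intro i hi
    have hX := (PowerSeries.X_pow_dvd_iff.mp (dvd_aux S A B hA hB i)) m
      (by have := (Finset.mem_Ico.mp hi).1; omega)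
    rwa [mul_comm] at hX
  rw [hz, add_zero]

set_option maxHeartbeats 1000000 in
lemma S_mul_dU_log (S A B : PowerSeries Q2) (hA : S - 1 = PowerSeries.X * A)
    (hB : dU S = PowerSeries.X * B) :
    S * dU (logPS S) = dU S := by
  ext N : 1
  have hgeo : S * (∑ i ∈ Finset.range N, (1 - S) ^ i) = 1 - (1 - S) ^ N := by
    have h := mul_neg_geom_sum (1 - S : PowerSeries Q2) N
    rwa [sub_sub_cancel] at h
  have hsplit : S * dU (logPS S) - dU S
      = S * (dU (logPS S) - dU S * ∑ i ∈ Finset.range N, (1 - S) ^ i)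
        - (1 - S) ^ N * dU S := by
    linear_combination dU S * hgeo
  have hdvd : (PowerSeries.X : PowerSeries Q2) ^ (N + 1) ∣ S * dU (logPS S) - dU S := by
    rw [hsplit]
    exact _root_.dvd_sub ((dvd_log S A B hA hB N).mul_left S) (dvd_aux S A B hA hB N)
  have h0 := PowerSeries.X_pow_dvd_iff.mp hdvd N (Nat.lt_succ_self N)
  rw [map_sub] at h0
  exact sub_eq_zero.mp h0

end ILWaux

open ILWaux in
set_option maxHeartbeats 1000000 in
/-- For every `d ≥ 0`,
`∂ᵤ([t^{d+1}]S^{d+1}/(d+1)!) = (1/d!)·Σ_{j=0}^{d} τʲ·[t^{d−j}]S^{d−j}` in `ℚ[u,τ]`. -/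
theorem ilw_stmt11 (S : PowerSeries Q2) (hS : IsILWSymbol S) (d : ℕ) :
    Polynomial.derivative
        ((Nat.factorial (d + 1) : ℚ)⁻¹ • PowerSeries.coeff (d + 1) (S ^ (d + 1)))
      = (Nat.factorial d : ℚ)⁻¹ •
          ∑ j ∈ Finset.range (d + 1), tauQ ^ j * PowerSeries.coeff (d - j) (S ^ (d - j)) := by
  obtain ⟨hc, heq⟩ := hS
  set L := logPS S with hL
  set A : PowerSeries Q2 := PowerSeries.C uQ + PowerSeries.C tauQ * L with hAdef
  have hA : S - 1 = PowerSeries.X * A := by linear_combination heq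
  have hdS : dU S = PowerSeries.X * (1 + PowerSeries.C tauQ * dU L) := by
    conv_lhs => rw [heq]
    rw [dU_add, dU_one, dU_mul, dU_X, dU_add, dU_mul, dU_C, dU_C]
    rw [show Polynomial.derivative uQ = 1 from by simp [uQ],
        show Polynomial.derivative tauQ = 0 from by simp [tauQ], map_one, map_zero]
    ring
  have hC : S * dU L = dU S := S_mul_dU_log S A _ hA hdS
  have hU1 : (S - PowerSeries.X * PowerSeries.C tauQ) * dU S = PowerSeries.X * S := by
    linear_combination S * hdS + (PowerSeries.X * PowerSeries.C tauQ) * hC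
  set U : PowerSeries Q2 := S - PowerSeries.X * PowerSeries.C tauQ with hUdef
  have hUV : U * dU (S ^ (d + 1)) = (d + 1) • (PowerSeries.X * S ^ (d + 1)) := by
    rw [dU_pow, mul_smul_comm]
    refine congrArg _ ?_
    linear_combination (S ^ d) * hU1
  set f : ℕ → PowerSeries Q2 :=
    fun j => PowerSeries.X ^ (j + 1) * (PowerSeries.C (tauQ ^ j) * S ^ (d + 1 - j)) with hf
  set G : PowerSeries Q2 := ∑ j ∈ Finset.range (d + 1),
    PowerSeries.X ^ (j + 1) * (PowerSeries.C (tauQ ^ j) * S ^ (d - j)) with hG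
  have hUG : U * G = PowerSeries.X * S ^ (d + 1)
      - PowerSeries.X ^ (d + 2) * PowerSeries.C (tauQ ^ (d + 1)) := by
    have step : ∀ j ∈ Finset.range (d + 1),
        U * (PowerSeries.X ^ (j + 1) * (PowerSeries.C (tauQ ^ j) * S ^ (d - j)))
          = f j - f (j + 1) := by
      intro j hj
      have hj' : j ≤ d := Nat.lt_succ_iff.mp (Finset.mem_range.mp hj)
      simp only [hf]
      rw [show d + 1 - j = (d - j) + 1 from by omega, Nat.succ_sub_succ]
      simp only [map_pow]
      rw [hUdef]
      ring
    rw [hG, Finset.mul_sum, Finset.sum_congr rfl step, Finset.sum_range_sub' f]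
    simp only [hf, Nat.sub_self, Nat.sub_zero, pow_zero, pow_one, map_one, one_mul, mul_one]
    ring
  have hkey : U * (dU (S ^ (d + 1)) - (d + 1) • G)
      = (d + 1) • (PowerSeries.X ^ (d + 2) * PowerSeries.C (tauQ ^ (d + 1))) := by
    rw [mul_sub, hUV, mul_smul_comm, hUG, smul_sub]
    abel
  have hu : IsUnit U := by
    rw [PowerSeries.isUnit_iff_constantCoeff]
    have h1 : PowerSeries.constantCoeff U = 1 := by
      rw [hUdef, map_sub, hc, map_mul, PowerSeries.constantCoeff_X, zero_mul, sub_zero]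
    rw [h1]; exact isUnit_one
  obtain ⟨v, hv⟩ := hu
  have hsolve : dU (S ^ (d + 1)) - (d + 1) • G
      = (↑v⁻¹ : PowerSeries Q2)
        * ((d + 1) • (PowerSeries.X ^ (d + 2) * PowerSeries.C (tauQ ^ (d + 1)))) := by
    rw [← hkey, ← hv, ← mul_assoc, Units.inv_mul, one_mul]
  have hdvd : (PowerSeries.X : PowerSeries Q2) ^ (d + 2) ∣ dU (S ^ (d + 1)) - (d + 1) • G := by
    rw [hsolve]
    refine Dvd.dvd.mul_left ?_ _
    rw [nsmul_eq_mul]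
    exact Dvd.dvd.mul_left (dvd_mul_right _ _) _
  have hco := PowerSeries.X_pow_dvd_iff.mp hdvd (d + 1) (by omega)
  rw [map_sub, sub_eq_zero] at hco
  rw [Polynomial.derivative_smul, ← dU_coeff, hco, map_nsmul]
  have hGc : PowerSeries.coeff (d + 1) G
      = ∑ j ∈ Finset.range (d + 1), tauQ ^ j * PowerSeries.coeff (d - j) (S ^ (d - j)) := by
    rw [hG, map_sum]
    apply Finset.sum_congr rfl
    intro j hj
    have hj' : j ≤ d := Nat.lt_succ_iff.mp (Finset.mem_range.mp hj)
    rw [show d + 1 = (d - j) + (j + 1) from by omega, PowerSeries.coeff_X_pow_mul,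
      PowerSeries.coeff_C_mul]
  rw [hGc, ← Nat.cast_smul_eq_nsmul ℚ, smul_smul]
  refine congrArg (· • _) ?_
  rw [Nat.factorial_succ]
  have h0 : ((d.factorial : ℚ)) ≠ 0 := by positivity
  push_cast
  field_simp
end
end

section
/- For every d ≥ 0 the dispersionless Hamiltonian identity holds in ℚ[u,τ]: ∂ᵤ( [t^{d+2}]S^{d+2}/(d+2)! − (τ/(d+1))·[t^{d+1}]S^{d+1}/(d+1)! ) = [t^{d+1}]S^{d+1}/(d+1)!. -/
open scoped BigOperators

noncomputable section

lemma coeff_dU (N : ℕ) (F : PowerSeries Q2) :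
    PowerSeries.coeff N (dU F) = Polynomial.derivative (PowerSeries.coeff N F) := by
  simp [dU]

lemma dU_add (F G : PowerSeries Q2) : dU (F + G) = dU F + dU G := by
  ext N; simp [coeff_dU]

lemma dU_mul (F G : PowerSeries Q2) : dU (F * G) = dU F * G + F * dU G := by
  ext N
  simp [coeff_dU, PowerSeries.coeff_mul, Polynomial.derivative_mul, Finset.sum_add_distrib]

lemma dU_smul (q : ℚ) (F : PowerSeries Q2) : dU (q • F) = q • dU F := by
  ext N; simp [coeff_dU]

lemma dU_one : dU (1 : PowerSeries Q2) = 0 := by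
  ext N; simp [coeff_dU, PowerSeries.coeff_one]
  split <;> simp

lemma dU_pow (F : PowerSeries Q2) (n : ℕ) :
    dU (F ^ (n + 1)) = (n + 1) • (F ^ n * dU F) := by
  induction n with
  | zero => simp [dU_mul, dU_one]
  | succ n ih =>
    rw [pow_succ, dU_mul, ih, succ_nsmul, succ_nsmul, succ_nsmul]
    simp only [smul_add, add_mul, smul_mul_assoc, pow_succ]
    ring

lemma dU_sub (F G : PowerSeries Q2) : dU (F - G) = dU F - dU G := by
  ext N; simp [coeff_dU]

lemma dU_sum {α : Type*} (s : Finset α) (f : α → PowerSeries Q2) :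
    dU (∑ i ∈ s, f i) = ∑ i ∈ s, dU (f i) := by
  ext N; simp [coeff_dU]

lemma coeff_pow_eq_zero {F : PowerSeries Q2} (hF : PowerSeries.constantCoeff F = 0)
    {j k : ℕ} (hjk : j < k) : PowerSeries.coeff j (F ^ k) = 0 := by
  have hX : (PowerSeries.X : PowerSeries Q2) ∣ F := PowerSeries.X_dvd_iff.mpr hF
  have : (PowerSeries.X : PowerSeries Q2) ^ k ∣ F ^ k := pow_dvd_pow_of_dvd hX k
  exact PowerSeries.X_pow_dvd_iff.mp this j hjk

lemma neg_one_pow_smul (i : ℕ) (z : PowerSeries Q2) :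
    ((-1 : ℚ) ^ i) • z = (-1 : PowerSeries Q2) ^ i * z := by
  induction i with
  | zero => simp
  | succ i ih =>
    rw [pow_succ, pow_succ, mul_comm _ (-1 : ℚ), mul_smul, ih, neg_one_smul]
    ring

lemma dU_pow_ge_one (F : PowerSeries Q2) {k : ℕ} (hk : 1 ≤ k) :
    dU (F ^ k) = k • (F ^ (k - 1) * dU F) := by
  obtain ⟨n, rfl⟩ : ∃ n, k = n + 1 := ⟨k - 1, by omega⟩
  simpa using dU_pow F n

lemma key_log (S : PowerSeries Q2) (h1 : PowerSeries.constantCoeff S = 1) :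
    S * dU (logPS S) = dU S := by
  have hS0 : PowerSeries.constantCoeff (S - 1) = 0 := by
    rw [map_sub, map_one, h1, sub_self]
  ext N
  set LM : PowerSeries Q2 :=
    ∑ k ∈ Finset.Icc 1 (N + 1), ((-1 : ℚ) ^ (k + 1) / (k : ℚ)) • (S - 1) ^ k with hLM
  -- Step A : coefficients of logPS S and LM agree up to N
  have hcoe : ∀ j ≤ N, PowerSeries.coeff j (logPS S) = PowerSeries.coeff j LM := by
    intro j hj
    rw [hLM, map_sum]
    simp only [LinearMap.map_smul_of_tower]
    rw [logPS, PowerSeries.coeff_mk]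
    refine Finset.sum_subset ?_ ?_
    · exact Finset.Icc_subset_Icc_right (by omega)
    · intro k hk hk'
      have hjk : j < k := by
        simp only [Finset.mem_Icc] at hk hk'
        omega
      rw [coeff_pow_eq_zero hS0 hjk, smul_zero]
  have h2 : PowerSeries.coeff N (S * dU (logPS S)) =
      PowerSeries.coeff N (S * dU LM) := by
    rw [PowerSeries.coeff_mul, PowerSeries.coeff_mul]
    refine Finset.sum_congr rfl fun p hp => ?_
    have hp2 : p.2 ≤ N := by
      rw [Finset.HasAntidiagonal.mem_antidiagonal] at hp; omega
    rw [coeff_dU, coeff_dU, hcoe p.2 hp2]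
  -- Step B : global computation of S * dU LM
  have h3 : S * dU LM = (1 - (1 - S) ^ (N + 1)) * dU S := by
    have hdLM : dU LM = (∑ i ∈ Finset.range (N + 1), (1 - S) ^ i) * dU S := by
      rw [hLM, dU_sum]
      have : ∀ k ∈ Finset.Icc 1 (N + 1),
          dU (((-1 : ℚ) ^ (k + 1) / (k : ℚ)) • (S - 1) ^ k)
            = ((-1 : ℚ) ^ (k + 1)) • ((S - 1) ^ (k - 1) * dU (S - 1)) := by
        intro k hk
        have hk1 : 1 ≤ k := (Finset.mem_Icc.mp hk).1
        rw [dU_smul, dU_pow_ge_one _ hk1, smul_comm, ← Nat.cast_smul_eq_nsmul ℚ, smul_smul]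
        congr 1
        field_simp
      rw [Finset.sum_congr rfl this]
      have hIcc : Finset.Icc 1 (N + 1) = Finset.Ico 1 (N + 2) := by
        rw [← Finset.Ico_add_one_right_eq_Icc]; rfl
      rw [hIcc, Finset.sum_Ico_eq_sum_range]
      norm_num
      rw [Finset.sum_mul]
      refine Finset.sum_congr rfl fun i _ => ?_
      have : dU (S - 1) = dU S := by rw [dU_sub, dU_one, sub_zero]
      rw [this]
      have h4 : ((-1 : ℚ) ^ (1 + i + 1)) = (-1 : ℚ) ^ i := by
        rw [show 1 + i + 1 = i + 2 by ring, pow_add]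
        simp
      rw [h4, neg_one_pow_smul, ← mul_assoc]
      congr 2
      rw [← mul_pow]
      congr 1
      ring
    rw [hdLM, ← mul_assoc]
    congr 1
    have hg := mul_neg_geom_sum (1 - S) (N + 1)
    rw [sub_sub_cancel] at hg
    rw [hg]
  rw [h2, h3, sub_mul, one_mul, map_sub]
  have hz : PowerSeries.coeff N ((1 - S) ^ (N + 1) * dU S) = 0 := by
    rw [PowerSeries.coeff_mul]
    refine Finset.sum_eq_zero fun p hp => ?_
    have hp1 : p.1 ≤ N := by rw [Finset.HasAntidiagonal.mem_antidiagonal] at hp; omega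
    have : PowerSeries.constantCoeff (1 - S) = 0 := by
      rw [map_sub, map_one, h1, sub_self]
    rw [coeff_pow_eq_zero this (by omega : p.1 < N + 1), zero_mul]
  rw [hz, sub_zero]

lemma dU_X : dU (PowerSeries.X : PowerSeries Q2) = 0 := by
  ext N
  rw [coeff_dU, PowerSeries.coeff_X]
  split <;> simp

lemma dU_C (p : Q2) : dU (PowerSeries.C p) = PowerSeries.C (Polynomial.derivative p) := by
  ext N
  rw [coeff_dU, PowerSeries.coeff_C, PowerSeries.coeff_C]
  split <;> simp_all

lemma eq1 (S : PowerSeries Q2) (hS : IsILWSymbol S) :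
    S * dU S = PowerSeries.X * S + PowerSeries.X * PowerSeries.C tauQ * dU S := by
  obtain ⟨h1, h2⟩ := hS
  have hdS : dU S = PowerSeries.X * (1 + PowerSeries.C tauQ * dU (logPS S)) := by
    conv_lhs => rw [h2]
    rw [dU_add, dU_one, dU_mul, dU_X, dU_add, dU_mul, dU_C, dU_C]
    have hu : Polynomial.derivative uQ = 1 := by simp [uQ]
    have ht : Polynomial.derivative tauQ = 0 := by simp [tauQ]
    rw [hu, ht]
    simp only [map_one, map_zero, zero_mul, zero_add, zero_mul, add_zero]
  calc S * dU S = PowerSeries.X * S + PowerSeries.X * PowerSeries.C tauQ *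
        (S * dU (logPS S)) := by rw [hdS]; ring
    _ = _ := by rw [key_log S h1]

lemma eq2 (S : PowerSeries Q2) (hS : IsILWSymbol S) (d : ℕ) :
    (d + 1) • dU (S ^ (d + 2)) =
      ((d + 2) * (d + 1)) • (PowerSeries.X * S ^ (d + 1))
        + (d + 2) • (PowerSeries.X * PowerSeries.C tauQ * dU (S ^ (d + 1))) := by
  have h2 : dU (S ^ (d + 2)) = (d + 2) • (S ^ (d + 1) * dU S) := dU_pow S (d + 1)
  have h1 : dU (S ^ (d + 1)) = (d + 1) • (S ^ d * dU S) := dU_pow S d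
  have key : S ^ (d + 1) * dU S
      = PowerSeries.X * S ^ (d + 1)
        + PowerSeries.X * PowerSeries.C tauQ * (S ^ d * dU S) := by
    calc S ^ (d + 1) * dU S = S ^ d * (S * dU S) := by ring
      _ = S ^ d * (PowerSeries.X * S + PowerSeries.X * PowerSeries.C tauQ * dU S) := by
          rw [eq1 S hS]
      _ = _ := by rw [pow_succ]; ring
  rw [h2, h1, key, smul_add, smul_add, smul_smul, smul_smul]
  refine congrArg₂ (· + ·) ?_ ?_
  · congr 1
    ring
  · rw [mul_smul_comm, smul_smul, mul_comm (d + 1) (d + 2)]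

/-- For every `d ≥ 0` the dispersionless Hamiltonian identity holds in
`ℚ[u,τ]`: `∂ᵤ([t^{d+2}]S^{d+2}/(d+2)! − (τ/(d+1))·[t^{d+1}]S^{d+1}/(d+1)!)
= [t^{d+1}]S^{d+1}/(d+1)!`. -/
theorem ilw_stmt13 (S : PowerSeries Q2) (hS : IsILWSymbol S) (d : ℕ) :
    Polynomial.derivative
        ((Nat.factorial (d + 2) : ℚ)⁻¹ • PowerSeries.coeff (d + 2) (S ^ (d + 2))
          - (d + 1 : ℚ)⁻¹ • (tauQ *
              ((Nat.factorial (d + 1) : ℚ)⁻¹ • PowerSeries.coeff (d + 1) (S ^ (d + 1)))))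
      = (Nat.factorial (d + 1) : ℚ)⁻¹ • PowerSeries.coeff (d + 1) (S ^ (d + 1)) := by
  set A2 : Q2 := PowerSeries.coeff (d + 2) (S ^ (d + 2)) with hA2
  set A1 : Q2 := PowerSeries.coeff (d + 1) (S ^ (d + 1)) with hA1
  set D2 : Q2 := Polynomial.derivative A2 with hD2
  set D1 : Q2 := Polynomial.derivative A1 with hD1
  have hco := congrArg (⇑(PowerSeries.coeff (d + 2))) (eq2 S hS d)
  simp only [map_nsmul, map_add, mul_assoc] at hco
  rw [PowerSeries.coeff_succ_X_mul, PowerSeries.coeff_succ_X_mul, PowerSeries.coeff_C_mul,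
    coeff_dU, coeff_dU] at hco
  rw [← hA1, ← hA2, ← hD1, ← hD2] at hco
  -- cast nat smul to rat smul
  rw [← Nat.cast_smul_eq_nsmul ℚ, ← Nat.cast_smul_eq_nsmul ℚ, ← Nat.cast_smul_eq_nsmul ℚ] at hco
  push_cast at hco
  have hd1 : ((d : ℚ) + 1) ≠ 0 := by positivity
  have hDeq : D2 = (((d : ℚ) + 1))⁻¹ •
      ((((d : ℚ) + 2) * ((d : ℚ) + 1)) • A1 + ((d : ℚ) + 2) • (tauQ * D1)) := by
    rw [← hco, inv_smul_smul₀ hd1]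
  have htau : Polynomial.derivative tauQ = 0 := by simp [tauQ]
  rw [map_sub, Polynomial.derivative_smul, Polynomial.derivative_smul, Polynomial.derivative_mul,
    htau, zero_mul, zero_add, Polynomial.derivative_smul, ← hD2, ← hD1, hDeq]
  have hfac2 : ((Nat.factorial (d + 2) : ℚ)) = ((d : ℚ) + 2) * (Nat.factorial (d + 1) : ℚ) := by
    rw [Nat.factorial_succ]; push_cast; ring
  have hfac1 : ((Nat.factorial (d + 1) : ℚ)) = ((d : ℚ) + 1) * (Nat.factorial d : ℚ) := by
    rw [Nat.factorial_succ]; push_cast; ring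
  have hfd : (Nat.factorial d : ℚ) ≠ 0 := Nat.cast_ne_zero.mpr (Nat.factorial_ne_zero d)
  have hd2 : ((d : ℚ) + 2) ≠ 0 := by positivity
  rw [mul_smul_comm]
  match_scalars <;> rw [hfac2, hfac1] <;> field_simp <;> ring
end
end

section
/- For every d ≥ 0, [t^{d+1}]S^{d+1}/(d+1)! = (∏_{j=1}^{d}(∂ᵤ⁻¹ + τ/j)) u in ℚ[u,τ], where ∂ᵤ⁻¹ is the ℚ[τ]-linear map on ℚ[u,τ] with ∂ᵤ⁻¹uʲ := u^{j+1}/(j+1) for j ≥ 0 and the factors of the product (which commute) are composed as operators. -/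
open scoped BigOperators

noncomputable section

/-- the `ℚ[τ]`-linear map `∂ᵤ⁻¹` on `ℚ[u,τ]` with `∂ᵤ⁻¹ uʲ = u^{j+1}/(j+1)` -/
def intU (p : Q2) : Q2 :=
  p.sum fun j c => Polynomial.C (((j : ℚ) + 1)⁻¹ • c) * Polynomial.X ^ (j + 1)

/-- the operator `∏_{j=1}^{n}(∂ᵤ⁻¹ + τ/j)` (the factors commute) applied to `p` -/
def iterProd : ℕ → Q2 → Q2
  | 0, p => p
  | n + 1, p => intU (iterProd n p) + (((n : ℚ) + 1)⁻¹ • tauQ) * iterProd n p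
namespace ILW15

open PowerSeries Polynomial

/-- coefficientwise `u`-derivative on power series -/
def D (F : PowerSeries Q2) : PowerSeries Q2 :=
  PowerSeries.mk fun n => Polynomial.derivative (PowerSeries.coeff n F)

@[simp] lemma coeff_D (F : PowerSeries Q2) (n : ℕ) :
    PowerSeries.coeff n (D F) = Polynomial.derivative (PowerSeries.coeff n F) :=
  PowerSeries.coeff_mk _ _

lemma D_one : D (1 : PowerSeries Q2) = 0 := by
  ext n
  simp [coeff_D, PowerSeries.coeff_one, apply_ite Polynomial.derivative]

lemma D_mul (F G : PowerSeries Q2) : D (F * G) = D F * G + F * D G := by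
  ext n
  simp only [coeff_D, PowerSeries.coeff_mul, map_add, map_sum, Polynomial.derivative_mul]
  rw [Finset.sum_add_distrib]

lemma D_pow (F : PowerSeries Q2) (n : ℕ) :
    D (F ^ (n + 1)) = (n + 1) • (F ^ n * D F) := by
  induction n with
  | zero => simp [D_mul, pow_succ, pow_zero, D_one]
  | succ m ih =>
      rw [pow_succ, D_mul, ih, smul_mul_assoc, succ_nsmul]
      ring

lemma coeff_pow_mul_eq_zero {G : PowerSeries Q2} (hG : PowerSeries.constantCoeff G = 0)
    (H : PowerSeries Q2) : ∀ k n, n < k → PowerSeries.coeff n (G ^ k * H) = 0 := by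
  intro k
  induction k with
  | zero => intro n hn; omega
  | succ m ih =>
      intro n hn
      rw [pow_succ, mul_comm (G ^ m) G, mul_assoc, PowerSeries.coeff_mul]
      apply Finset.sum_eq_zero
      rintro ⟨i, j⟩ hij
      rw [Finset.HasAntidiagonal.mem_antidiagonal] at hij
      rcases Nat.eq_zero_or_pos i with hi | hi
      · subst hi
        simp [PowerSeries.coeff_zero_eq_constantCoeff, hG]
      · have : j < m := by omega
        rw [ih j this, mul_zero]

lemma coeff_pow_eq_zero {G : PowerSeries Q2} (hG : PowerSeries.constantCoeff G = 0)
    {k n : ℕ} (h : n < k) : PowerSeries.coeff n (G ^ k) = 0 := by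
  simpa using coeff_pow_mul_eq_zero hG 1 k n h

lemma coeff_mul_congr {A B F : PowerSeries Q2} {N : ℕ}
    (h : ∀ j ≤ N, PowerSeries.coeff j A = PowerSeries.coeff j B) :
    PowerSeries.coeff N (F * A) = PowerSeries.coeff N (F * B) := by
  rw [PowerSeries.coeff_mul, PowerSeries.coeff_mul]
  apply Finset.sum_congr rfl
  rintro ⟨i, j⟩ hij
  rw [Finset.HasAntidiagonal.mem_antidiagonal] at hij
  rw [h j (by omega)]

/-- partial sums of the alternating geometric series -/
def PM (G : PowerSeries Q2) (M : ℕ) : PowerSeries Q2 :=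
  ∑ k ∈ Finset.Icc 1 M, ((-1 : ℚ) ^ (k + 1)) • G ^ (k - 1)

lemma telescope {S : PowerSeries Q2} (M : ℕ) :
    S * PM (S - 1) M = 1 - ((-1 : ℚ) ^ M) • (S - 1) ^ M := by
  induction M with
  | zero => simp [PM]
  | succ m ih =>
      rw [PM, Finset.sum_Icc_succ_top (by omega : 1 ≤ m + 1), ← PM, mul_add, ih,
        Nat.add_sub_cancel]
      have hc : ((-1 : ℚ) ^ (m + 1 + 1)) = (-1 : ℚ) ^ m := by
        rw [pow_succ, pow_succ]; ring
      have hstep : S * ((-1 : ℚ) ^ (m + 1 + 1) • (S - 1) ^ m)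
          = (-1 : ℚ) ^ m • (S - 1) ^ (m + 1) + (-1 : ℚ) ^ m • (S - 1) ^ m := by
        rw [hc, mul_smul_comm]
        nth_rewrite 1 [show S = 1 + (S - 1) by ring]
        rw [add_mul, one_mul, ← pow_succ', smul_add]
        exact add_comm _ _
      rw [hstep]
      rw [pow_succ (-1 : ℚ) m, mul_neg_one, neg_smul]
      abel

lemma coeff_logPS (F : PowerSeries Q2) (N : ℕ) :
    PowerSeries.coeff N (logPS F) = ∑ k ∈ Finset.Icc 1 N,
      ((-1 : ℚ) ^ (k + 1) / (k : ℚ)) • PowerSeries.coeff N ((F - 1) ^ k) :=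
  PowerSeries.coeff_mk _ _

/-- key: `S · (log S)' = S'` -/
lemma D_sub_one (S : PowerSeries Q2) : D (S - 1) = D S := by
  ext n
  rw [coeff_D, coeff_D, map_sub, PowerSeries.coeff_one]
  split_ifs <;> simp

/-- key: `S · (log S)' = S'` -/
lemma S_mul_D_log (S : PowerSeries Q2) (hc : PowerSeries.constantCoeff S = 1) :
    S * D (logPS S) = D S := by
  have hG : PowerSeries.constantCoeff (S - 1) = 0 := by simp [hc]
  apply PowerSeries.ext
  intro N
  have key : ∀ j ≤ N, PowerSeries.coeff j (D (logPS S))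
      = PowerSeries.coeff j (PM (S - 1) (N + 1) * D S) := by
    intro j hj
    rw [coeff_D, coeff_logPS, map_sum]
    simp only [Polynomial.derivative_smul]
    rw [Finset.sum_subset (Finset.Icc_subset_Icc_right (by omega : j ≤ N + 1))
      (fun k hk hk' => ?_)]
    · rw [PM, Finset.sum_mul, map_sum]
      apply Finset.sum_congr rfl
      intro k hk
      rw [Finset.mem_Icc] at hk
      obtain ⟨m, rfl⟩ : ∃ m, k = m + 1 := ⟨k - 1, by omega⟩
      rw [show Polynomial.derivative (PowerSeries.coeff j ((S - 1) ^ (m + 1)))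
          = PowerSeries.coeff j (D ((S - 1) ^ (m + 1))) from (coeff_D _ _).symm]
      rw [D_pow, D_sub_one, Nat.add_sub_cancel, smul_mul_assoc]
      simp only [PowerSeries.coeff_smul]
      rw [map_nsmul, ← Nat.cast_smul_eq_nsmul ℚ, smul_smul]
      congr 1
      have hne : ((m + 1 : ℕ) : ℚ) ≠ 0 := by positivity
      field_simp
    · rw [Finset.mem_Icc] at hk
      rw [Finset.mem_Icc] at hk'
      rw [coeff_pow_eq_zero hG (show j < k by omega)]
      simp
  calc PowerSeries.coeff N (S * D (logPS S))
      = PowerSeries.coeff N (S * (PM (S - 1) (N + 1) * D S)) := coeff_mul_congr key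
    _ = PowerSeries.coeff N ((S * PM (S - 1) (N + 1)) * D S) := by rw [mul_assoc]
    _ = PowerSeries.coeff N (D S) := by
        rw [telescope, sub_mul, one_mul, map_sub, smul_mul_assoc, PowerSeries.coeff_smul,
          coeff_pow_mul_eq_zero hG (D S) (N + 1) N (by omega), smul_zero, sub_zero]

lemma D_add (F G : PowerSeries Q2) : D (F + G) = D F + D G := by
  ext n
  simp [coeff_D]

lemma D_X : D (PowerSeries.X : PowerSeries Q2) = 0 := by
  ext n
  rw [coeff_D, PowerSeries.coeff_X]
  split_ifs <;> simp

lemma D_C (a : Q2) : D (PowerSeries.C a) = PowerSeries.C (Polynomial.derivative a) := by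
  ext n
  rw [coeff_D, PowerSeries.coeff_C, PowerSeries.coeff_C, apply_ite Polynomial.derivative]
  simp

variable {S : PowerSeries Q2}

lemma D_S (hS : IsILWSymbol S) :
    D S = PowerSeries.X * (1 + PowerSeries.C tauQ * D (logPS S)) := by
  nth_rewrite 1 [hS.2]
  rw [D_add, D_one, D_mul, D_X, D_add, D_mul, D_C, D_C]
  rw [show Polynomial.derivative (uQ : Q2) = 1 from Polynomial.derivative_X,
    show Polynomial.derivative (tauQ : Q2) = 0 from Polynomial.derivative_C]
  simp only [map_one, map_zero, zero_mul, zero_add, zero_mul, add_zero]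

lemma D_S_mul (hS : IsILWSymbol S) :
    D S * (S - PowerSeries.X * PowerSeries.C tauQ) = PowerSeries.X * S := by
  have h1 : S * D S = PowerSeries.X * S
      + PowerSeries.X * PowerSeries.C tauQ * (S * D (logPS S)) := by
    rw [D_S hS]; ring
  rw [S_mul_D_log S hS.1] at h1
  linear_combination h1

/-- the inverse of `S - tτ` -/
def Ainv (S : PowerSeries Q2) : PowerSeries Q2 :=
  PowerSeries.invOfUnit (S - PowerSeries.X * PowerSeries.C tauQ) 1

lemma U_mul_Ainv (hS : IsILWSymbol S) :
    (S - PowerSeries.X * PowerSeries.C tauQ) * Ainv S = 1 := by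
  apply PowerSeries.mul_invOfUnit
  rw [map_sub, map_mul, hS.1]
  simp

lemma D_S_eq (hS : IsILWSymbol S) : D S = PowerSeries.X * S * Ainv S := by
  have := D_S_mul hS
  calc D S = D S * ((S - PowerSeries.X * PowerSeries.C tauQ) * Ainv S) := by
        rw [U_mul_Ainv hS, mul_one]
    _ = D S * (S - PowerSeries.X * PowerSeries.C tauQ) * Ainv S := by ring
    _ = PowerSeries.X * S * Ainv S := by rw [D_S_mul hS]

/-- derivative of the coefficients of powers of `S` -/
lemma deriv_coeff_pow (hS : IsILWSymbol S) (n : ℕ) :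
    Polynomial.derivative (PowerSeries.coeff (n + 1) (S ^ (n + 1)))
      = (n + 1) • PowerSeries.coeff n (S ^ (n + 1) * Ainv S) := by
  rw [show Polynomial.derivative (PowerSeries.coeff (n + 1) (S ^ (n + 1)))
      = PowerSeries.coeff (n + 1) (D (S ^ (n + 1))) from (coeff_D _ _).symm]
  rw [D_pow, D_S_eq hS]
  rw [show S ^ n * (PowerSeries.X * S * Ainv S) = PowerSeries.X * (S ^ (n + 1) * Ainv S) by ring]
  rw [map_nsmul, PowerSeries.coeff_succ_X_mul]

lemma shift_pow (hS : IsILWSymbol S) (n d : ℕ) :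
    PowerSeries.coeff (d + 1) (S ^ (n + 1) * S * Ainv S)
      = PowerSeries.coeff (d + 1) (S ^ (n + 1))
        + tauQ * PowerSeries.coeff d (S ^ (n + 1) * Ainv S) := by
  have h : S ^ (n + 1) * S * Ainv S = S ^ (n + 1)
      + PowerSeries.X * (PowerSeries.C tauQ * (S ^ (n + 1) * Ainv S)) := by
    have h2 : S * Ainv S = 1 + PowerSeries.X * PowerSeries.C tauQ * Ainv S := by
      have := U_mul_Ainv hS
      linear_combination this
    calc S ^ (n + 1) * S * Ainv S = S ^ (n + 1) * (S * Ainv S) := by ring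
      _ = S ^ (n + 1) * (1 + PowerSeries.X * PowerSeries.C tauQ * Ainv S) := by rw [h2]
      _ = S ^ (n + 1) + PowerSeries.X * (PowerSeries.C tauQ * (S ^ (n + 1) * Ainv S)) := by
          ring
  rw [h, map_add, PowerSeries.coeff_succ_X_mul, PowerSeries.coeff_C_mul]

/-- the evaluation `u = 0` ring hom -/
def ev0 : Q2 →+* Polynomial ℚ := Polynomial.constantCoeff

lemma coeff_mul_eq_zero' {R : Type*} [CommRing R] {A : PowerSeries R} {m : ℕ}
    (h : ∀ j ≤ m, PowerSeries.coeff j A = 0) (B : PowerSeries R) :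
    PowerSeries.coeff m (B * A) = 0 := by
  rw [PowerSeries.coeff_mul]
  apply Finset.sum_eq_zero
  rintro ⟨i, j⟩ hij
  rw [Finset.HasAntidiagonal.mem_antidiagonal] at hij
  rw [h j (by omega), mul_zero]

lemma ev0_smul (c : ℚ) (x : Q2) : ev0 (c • x) = c • ev0 x := by
  simp [ev0, Polynomial.constantCoeff_apply, Polynomial.coeff_smul]

lemma map_ev0_S (hS : IsILWSymbol S) : PowerSeries.map ev0 S = 1 := by
  set T := PowerSeries.map ev0 S with hT
  have key : ∀ n : ℕ, PowerSeries.coeff n T = if n = 0 then 1 else 0 := by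
    intro n
    induction n using Nat.strong_induction_on with
    | _ n ih =>
      match n with
      | 0 =>
          rw [if_pos rfl, hT, PowerSeries.coeff_map,
            PowerSeries.coeff_zero_eq_constantCoeff, hS.1, map_one]
      | (m + 1) =>
          have hTc : ∀ j ≤ m, PowerSeries.coeff j (T - 1) = 0 := by
            intro j hj
            rw [map_sub]
            match j with
            | 0 =>
                rw [hT, PowerSeries.coeff_map, PowerSeries.coeff_zero_eq_constantCoeff,
                  hS.1, map_one]
                simp
            | (i + 1) =>
                rw [ih (i + 1) (by omega), PowerSeries.coeff_one]
                simp
          have hlog : ev0 (PowerSeries.coeff m (logPS S)) = 0 := by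
            rw [coeff_logPS, map_sum]
            apply Finset.sum_eq_zero
            intro k hk
            rw [Finset.mem_Icc] at hk
            rw [ev0_smul]
            have hmap : ev0 (PowerSeries.coeff m ((S - 1) ^ k))
                = PowerSeries.coeff m ((T - 1) ^ k) := by
              rw [hT, ← PowerSeries.coeff_map, map_pow, map_sub, map_one]
            rw [hmap]
            obtain ⟨i, rfl⟩ : ∃ i, k = i + 1 := ⟨k - 1, by omega⟩
            rw [show (T - 1) ^ (i + 1) = (T - 1) ^ i * (T - 1) from pow_succ _ _,
              coeff_mul_eq_zero' hTc]
            simp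
          have hcoeff : PowerSeries.coeff (m + 1) S
              = (if m = 0 then uQ else 0) + tauQ * PowerSeries.coeff m (logPS S) := by
            nth_rewrite 1 [hS.2]
            rw [map_add, PowerSeries.coeff_one, if_neg (Nat.succ_ne_zero m),
              PowerSeries.coeff_succ_X_mul, map_add, PowerSeries.coeff_C,
              PowerSeries.coeff_C_mul, zero_add]
          rw [if_neg (Nat.succ_ne_zero m), hT, PowerSeries.coeff_map, hcoeff,
            map_add, map_mul, hlog, mul_zero, add_zero]
          split_ifs with h
          · simp [ev0, uQ]
          · simp
  ext n
  rw [key, PowerSeries.coeff_one]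

lemma ev0_coeff_pow (hS : IsILWSymbol S) (n p : ℕ) (hn : n ≠ 0) :
    ev0 (PowerSeries.coeff n (S ^ p)) = 0 := by
  have : ev0 (PowerSeries.coeff n (S ^ p))
      = PowerSeries.coeff n ((PowerSeries.map ev0 S) ^ p) := by
    rw [← PowerSeries.coeff_map, map_pow]
  rw [this, map_ev0_S hS, one_pow, PowerSeries.coeff_one, if_neg hn]

lemma derivative_intU (p : Q2) : Polynomial.derivative (intU p) = p := by
  unfold intU
  rw [Polynomial.sum, map_sum]
  conv_rhs => rw [← Polynomial.sum_C_mul_X_pow_eq p]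
  rw [Polynomial.sum]
  apply Finset.sum_congr rfl
  intro j hj
  rw [Polynomial.derivative_C_mul_X_pow, Nat.add_sub_cancel]
  congr 1
  rw [smul_mul_assoc, mul_comm, ← nsmul_eq_mul, ← Nat.cast_smul_eq_nsmul ℚ, smul_smul,
    Nat.cast_add, Nat.cast_one,
    inv_mul_cancel₀ (by positivity : ((j : ℚ) + 1) ≠ 0), one_smul]

lemma coeff_zero_intU (p : Q2) : (intU p).coeff 0 = 0 := by
  unfold intU
  rw [Polynomial.sum, Polynomial.finset_sum_coeff]
  apply Finset.sum_eq_zero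
  intro j hj
  rw [Polynomial.coeff_C_mul, Polynomial.coeff_X_pow]
  simp

lemma eq_of_deriv_coeff0 {p q : Q2} (h1 : Polynomial.derivative p = Polynomial.derivative q)
    (h2 : p.coeff 0 = q.coeff 0) : p = q := by
  have h : Polynomial.derivative (p - q) = 0 := by
    rw [Polynomial.derivative_sub, h1, sub_self]
  have h3 := Polynomial.eq_C_of_derivative_eq_zero h
  rw [Polynomial.coeff_sub, h2, sub_self, map_zero] at h3
  exact sub_eq_zero.mp h3

lemma coeff_one_S (hS : IsILWSymbol S) : PowerSeries.coeff 1 S = uQ := by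
  nth_rewrite 1 [hS.2]
  rw [map_add, PowerSeries.coeff_one, show (1 : ℕ) = 0 + 1 from rfl,
    PowerSeries.coeff_succ_X_mul, map_add, PowerSeries.coeff_C,
    PowerSeries.coeff_C_mul, coeff_logPS]
  simp

end ILW15

/-- For every `d ≥ 0`,
`[t^{d+1}]S^{d+1}/(d+1)! = (∏_{j=1}^{d}(∂ᵤ⁻¹ + τ/j)) u` in `ℚ[u,τ]`. -/
theorem ilw_stmt15 (S : PowerSeries Q2) (hS : IsILWSymbol S) (d : ℕ) :
    (Nat.factorial (d + 1) : ℚ)⁻¹ • PowerSeries.coeff (d + 1) (S ^ (d + 1))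
      = iterProd d uQ := by
  induction d with
  | zero =>
      rw [pow_one, ILW15.coeff_one_S hS]
      norm_num [iterProd]
  | succ d ih =>
      rw [iterProd, ← ih]
      set q : Q2 := (Nat.factorial (d + 1) : ℚ)⁻¹
        • PowerSeries.coeff (d + 1) (S ^ (d + 1)) with hq
      apply ILW15.eq_of_deriv_coeff0
      · rw [Polynomial.derivative_smul, ILW15.deriv_coeff_pow hS (d + 1),
          show S ^ (d + 1 + 1) * ILW15.Ainv S = S ^ (d + 1) * S * ILW15.Ainv S by
            rw [pow_succ],
          ILW15.shift_pow hS d d]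
        rw [Polynomial.derivative_add, ILW15.derivative_intU, Polynomial.derivative_mul, hq,
          Polynomial.derivative_smul, Polynomial.derivative_smul, ILW15.deriv_coeff_pow hS d,
          show Polynomial.derivative (tauQ : Q2) = 0 from Polynomial.derivative_C,
          smul_zero, zero_mul, zero_add]
        simp only [smul_mul_assoc, mul_smul_comm, smul_add, smul_smul]
        match_scalars
        · rw [Nat.factorial_succ (d + 1)]
          have h1 : ((d + 1).factorial : ℚ) ≠ 0 :=
            Nat.cast_ne_zero.mpr (Nat.factorial_ne_zero _)
          have h2 : ((d : ℚ) + 1 + 1) ≠ 0 := by positivity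
          push_cast
          field_simp
        · rw [Nat.factorial_succ (d + 1)]
          have h1 : ((d + 1).factorial : ℚ) ≠ 0 :=
            Nat.cast_ne_zero.mpr (Nat.factorial_ne_zero _)
          have h2 : ((d : ℚ) + 1 + 1) ≠ 0 := by positivity
          have h3 : ((d : ℚ) + 1) ≠ 0 := by positivity
          push_cast
          field_simp
      · rw [Polynomial.coeff_smul, Polynomial.coeff_add, ILW15.coeff_zero_intU,
          Polynomial.mul_coeff_zero, hq, Polynomial.coeff_smul, Polynomial.coeff_smul]
        have e1 : (PowerSeries.coeff (d + 1 + 1) (S ^ (d + 1 + 1))).coeff 0 = 0 := by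
          have := ILW15.ev0_coeff_pow hS (d + 1 + 1) (d + 1 + 1) (by omega)
          simpa [ILW15.ev0, Polynomial.constantCoeff_apply] using this
        have e2 : (PowerSeries.coeff (d + 1) (S ^ (d + 1))).coeff 0 = 0 := by
          have := ILW15.ev0_coeff_pow hS (d + 1) (d + 1) (by omega)
          simpa [ILW15.ev0, Polynomial.constantCoeff_apply] using this
        rw [e1, e2]
        simp
end
end
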